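/- Let Σ be an N×N complex Hermitian positive semidefinite matrix with eigenvalues β_1 ≥ β_2 ≥ … ≥ β_N (listed with multiplicity in decreasing order), let c ≥ 0 be a real number, let K ≤ N, and let W be a complex N×K matrix with Wᴴ·W = I_K. Then det(I_K + c·Wᴴ·Σ·W) is a positive real number and satisfies det(I_K + c·Wᴴ·Σ·W) ≤ ∏_{n=1}^{K} (1 + c·β_n). Moreover, equality holds when the columns of W are orthonormal eigenvectors of Σ associated with the K largest eigenvalues β_1, …, β_K. -/
import Mathlib

open Matrix Finset Equiv
open scoped ComplexOrder

section CB

variable {R : Type*} [CommRing R] {K N : ℕ}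

private theorem cb_aux (A : Matrix (Fin K) (Fin N) R) (B : Matrix (Fin N) (Fin K) R)
    {p : Fin K → Fin N} (H : ¬Function.Injective p) :
    (∑ σ : Perm (Fin K), ((Perm.sign σ : ℤ) : R) * ∏ x, A (σ x) (p x) * B (p x) x) = 0 := by
  obtain ⟨i, j, hpij, hij⟩ : ∃ i j, p i = p j ∧ i ≠ j := by
    rw [Function.Injective] at H
    push_neg at H
    obtain ⟨i, j, h1, h2⟩ := H
    exact ⟨i, j, h1, h2⟩
  exact
    sum_involution (fun σ _ => σ * Equiv.swap i j)
      (fun σ _ => by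
        have : (∏ x, A (σ x) (p x)) = ∏ x, A ((σ * Equiv.swap i j) x) (p x) :=
          Fintype.prod_equiv (swap i j) _ _ (by simp [apply_swap_eq_self hpij])
        simp [this, Perm.sign_swap hij, -Perm.sign_swap', prod_mul_distrib])
      (fun σ _ _ => (not_congr mul_swap_eq_iff).mpr hij) (fun _ _ => mem_univ _) fun σ _ =>
      mul_swap_involutive i j σ

/-- Pairs (strictly monotone map, permutation) ≃ injective maps. -/
private def smEquiv (K N : ℕ) :
    {q : Fin K → Fin N // StrictMono q} × Perm (Fin K) ≃
      {p : Fin K → Fin N // Function.Injective p} where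
  toFun x := ⟨x.1.1 ∘ x.2, x.1.2.injective.comp x.2.injective⟩
  invFun p := ⟨⟨p.1 ∘ Tuple.sort p.1,
      (Tuple.monotone_sort p.1).strictMono_of_injective
        (p.2.comp (Tuple.sort p.1).injective)⟩, (Tuple.sort p.1)⁻¹⟩
  left_inv := by
    rintro ⟨⟨q, hq⟩, σ⟩
    have h1 : StrictMono ((q ∘ σ) ∘ Tuple.sort (q ∘ σ)) :=
      (Tuple.monotone_sort (q ∘ σ)).strictMono_of_injective
        ((hq.injective.comp σ.injective).comp (Tuple.sort (q ∘ σ)).injective)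
    have hrange : Set.range ((q ∘ σ) ∘ (Tuple.sort (q ∘ σ) : Perm (Fin K))) = Set.range q := by
      rw [(Tuple.sort (q ∘ σ)).surjective.range_comp, σ.surjective.range_comp]
    haveI : WellFoundedLT (Fin K) := Finite.to_wellFoundedLT
    have hqeq : (q ∘ σ) ∘ (Tuple.sort (q ∘ σ) : Perm (Fin K)) = q := (StrictMono.range_inj (β := Fin K) h1 hq).mp hrange
    have hσ : (Tuple.sort (q ∘ σ))⁻¹ = σ := by
      refine Equiv.ext fun i => hq.injective ?_
      have := congrFun hqeq ((Tuple.sort (q ∘ σ))⁻¹ i)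
      simpa using this.symm
    simp only [Prod.mk.injEq, Subtype.mk.injEq]
    exact ⟨hqeq, hσ⟩
  right_inv := by
    rintro ⟨p, hp⟩
    simp only [Subtype.mk.injEq]
    funext i
    simp

/-- **Cauchy–Binet formula**. -/
private theorem det_mul_rect (A : Matrix (Fin K) (Fin N) R) (B : Matrix (Fin N) (Fin K) R) :
    (A * B).det = ∑ q : {q : Fin K → Fin N // StrictMono q},
      (A.submatrix id q.1).det * (B.submatrix q.1 id).det := by
  classical
  set F : (Fin K → Fin N) → R := fun p =>
    ∑ σ : Perm (Fin K), ((Perm.sign σ : ℤ) : R) * ∏ x, A (σ x) (p x) * B (p x) x with hF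
  have key : ∀ q : Fin K → Fin N, StrictMono q →
      (∑ σ' : Perm (Fin K), F (q ∘ σ')) =
        (A.submatrix id q).det * (B.submatrix q id).det := by
    intro q hq
    have step : ∀ σ' : Perm (Fin K), F (q ∘ σ') =
        (((Perm.sign σ' : ℤ) : R) * ∏ i, B (q (σ' i)) i) *
          ∑ τ : Perm (Fin K), ((Perm.sign τ : ℤ) : R) * ∏ j, A (τ j) (q j) := by
      intro σ'
      have e1 : F (q ∘ σ') =
          ∑ τ : Perm (Fin K), ((Perm.sign (τ * σ') : ℤ) : R) *
            ∏ x, A ((τ * σ') x) (q (σ' x)) * B (q (σ' x)) x := by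
        rw [hF]
        exact (Fintype.sum_equiv (Equiv.mulRight σ')
          (fun τ => ((Perm.sign (τ * σ') : ℤ) : R) *
            ∏ x, A ((τ * σ') x) (q (σ' x)) * B (q (σ' x)) x)
          (fun σ => ((Perm.sign σ : ℤ) : R) * ∏ x, A (σ x) ((q ∘ σ') x) * B ((q ∘ σ') x) x)
          (fun τ => rfl)).symm
      rw [e1, Finset.mul_sum]
      refine Finset.sum_congr rfl fun τ _ => ?_
      have hs : ((Perm.sign (τ * σ') : ℤ) : R) =
          ((Perm.sign τ : ℤ) : R) * ((Perm.sign σ' : ℤ) : R) := by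
        rw [Perm.sign_mul]; push_cast; ring
      have hp : (∏ x, A ((τ * σ') x) (q (σ' x)) * B (q (σ' x)) x) =
          (∏ j, A (τ j) (q j)) * ∏ i, B (q (σ' i)) i := by
        rw [prod_mul_distrib]
        congr 1
        exact Equiv.prod_comp σ' fun i => A (τ i) (q i)
      rw [hs, hp]; ring
    calc (∑ σ' : Perm (Fin K), F (q ∘ σ'))
        = (∑ σ' : Perm (Fin K), ((Perm.sign σ' : ℤ) : R) * ∏ i, B (q (σ' i)) i) *
          ∑ τ : Perm (Fin K), ((Perm.sign τ : ℤ) : R) * ∏ j, A (τ j) (q j) := by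
          rw [Finset.sum_mul]
          exact Finset.sum_congr rfl fun σ' _ => step σ'
      _ = (A.submatrix id q).det * (B.submatrix q id).det := by
          rw [det_apply', det_apply']
          simp only [submatrix_apply, id_eq]
          ring
  calc (A * B).det
      = ∑ p : Fin K → Fin N, F p := by
        simp only [det_apply', mul_apply, prod_univ_sum, mul_sum, Fintype.piFinset_univ, hF]
        rw [Finset.sum_comm]
    _ = ∑ p ∈ univ.filter (fun p => Function.Injective p), F p := by
        refine (sum_subset (filter_subset _ _) fun p _ hp => ?_).symm
        rw [hF]
        exact cb_aux A B (by simpa using hp)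
    _ = ∑ p : {p : Fin K → Fin N // Function.Injective p}, F p.1 := by
        refine Finset.sum_subtype _ (fun x => ?_) F
        simp
    _ = ∑ x : {q : Fin K → Fin N // StrictMono q} × Perm (Fin K), F ((smEquiv K N x).1) :=
        (Equiv.sum_comp (smEquiv K N) fun p => F p.1).symm
    _ = ∑ q : {q : Fin K → Fin N // StrictMono q}, ∑ σ' : Perm (Fin K), F (q.1 ∘ σ') := by
        rw [Fintype.sum_prod_type]
        exact Finset.sum_congr rfl fun q _ => Finset.sum_congr rfl fun σ' _ => rfl
    _ = _ := Finset.sum_congr rfl fun q _ => key q.1 q.2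

end CB

namespace StmtTwelve

variable {K N : ℕ}

/-- determinant of `Vᴴ · diag(m) · V` as a real sum. -/
private theorem detVMV (V : Matrix (Fin N) (Fin K) ℂ) (m : Fin N → ℝ) :
    (Vᴴ * Matrix.diagonal (fun n => (m n : ℂ)) * V).det =
      ((∑ q : {q : Fin K → Fin N // StrictMono q},
        (∏ j, m (q.1 j)) * Complex.normSq ((V.submatrix q.1 id).det) : ℝ) : ℂ) := by
  rw [det_mul_rect (Vᴴ * Matrix.diagonal (fun n => (m n : ℂ))) V]
  push_cast
  refine Finset.sum_congr rfl fun q _ => ?_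
  have hsub : (Vᴴ * Matrix.diagonal (fun n => (m n : ℂ))).submatrix id q.1 =
      (V.submatrix q.1 id)ᴴ * Matrix.diagonal (fun j => (m (q.1 j) : ℂ)) := by
    ext i j
    simp [Matrix.mul_diagonal, conjTranspose_submatrix]
  rw [hsub, det_mul, det_conjTranspose, det_diagonal]
  set d := (V.submatrix q.1 id).det with hd
  have hsq : (star d) * d = (Complex.normSq d : ℂ) := by
    rw [mul_comm]
    exact Complex.mul_conj d
  rw [mul_comm (star d) _, mul_assoc, hsq]

private theorem strictMono_le (q : Fin K → Fin N) (hq : StrictMono q) (j : Fin K) :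
    (j : ℕ) ≤ (q j : ℕ) := by
  obtain ⟨n, hn⟩ := j
  induction n with
  | zero => exact Nat.zero_le _
  | succ n ih =>
    have h' : n < K := lt_trans (Nat.lt_succ_self n) hn
    have h1 := ih h'
    have h2 : q ⟨n, h'⟩ < q ⟨n + 1, hn⟩ := hq (by simp [Fin.lt_def])
    have h3 := Fin.lt_def.mp h2
    simp only [Fin.val_mk] at h1 h3 ⊢
    omega

end StmtTwelve
/-- For Hermitian PSD `Σ = U·diag(β)·Uᴴ` with `U` unitary and
decreasing nonnegative eigenvalues `β`, `c ≥ 0`, `K ≤ N`, and any `W` with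
orthonormal columns, `det(I_K + c·Wᴴ·Σ·W)` is a positive real number satisfying
`det(I_K + c·Wᴴ·Σ·W) ≤ ∏_{n=1}^K (1 + c·β_n)`, with equality whenever the columns
of `W` are orthonormal eigenvectors of `Σ` for the `K` largest eigenvalues
`β_1, …, β_K`. (Positivity and the inequality are stated in the complex order, which
forces the determinant to be real.) -/
theorem stmt_12 (N K : ℕ) (hK : K ≤ N)
    (Sgm U : Matrix (Fin N) (Fin N) ℂ)
    (β : Fin N → ℝ) (hβdec : Antitone β) (hβ0 : ∀ n, 0 ≤ β n)
    (hU : Uᴴ * U = 1)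
    (hSgm : Sgm = U * Matrix.diagonal (fun n => (β n : ℂ)) * Uᴴ)
    (c : ℝ) (hc : 0 ≤ c)
    (W : Matrix (Fin N) (Fin K) ℂ) (hW : Wᴴ * W = 1) :
    (0 < (1 + (c : ℂ) • (Wᴴ * Sgm * W)).det ∧
      (1 + (c : ℂ) • (Wᴴ * Sgm * W)).det ≤
        ((∏ k : Fin K, (1 + c * β (Fin.castLE hK k)) : ℝ) : ℂ)) ∧
    ∀ W' : Matrix (Fin N) (Fin K) ℂ, W'ᴴ * W' = 1 →
      (∀ k : Fin K, Sgm *ᵥ (fun i => W' i k) =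
        ((β (Fin.castLE hK k) : ℂ)) • fun i => W' i k) →
      (1 + (c : ℂ) • (W'ᴴ * Sgm * W')).det =
        ((∏ k : Fin K, (1 + c * β (Fin.castLE hK k)) : ℝ) : ℂ) := by
  classical
  have hUU : U * Uᴴ = 1 := mul_eq_one_comm.mp hU
  set D : Matrix (Fin N) (Fin N) ℂ := Matrix.diagonal (fun n => (β n : ℂ)) with hD
  set m : Fin N → ℝ := fun n => 1 + c * β n with hm
  have hm1 : ∀ n, 1 ≤ m n := fun n => by
    have := mul_nonneg hc (hβ0 n)
    show (1 : ℝ) ≤ 1 + c * β n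
    linarith
  have hmono : Antitone m := by
    intro a b hab
    have := mul_le_mul_of_nonneg_left (hβdec hab) hc
    simp only [hm]; linarith
  have hdiag : Matrix.diagonal (fun n => ((m n : ℝ) : ℂ)) = 1 + (c : ℂ) • D := by
    ext i j
    rcases eq_or_ne i j with rfl | h
    · simp only [hm, hD, Matrix.diagonal_apply_eq, Matrix.add_apply, Matrix.one_apply_eq,
        Matrix.smul_apply, smul_eq_mul]
      push_cast; ring
    · simp [hm, hD, Matrix.diagonal_apply_ne _ h, Matrix.one_apply_ne h]
  -- the key rewriting for any matrix with orthonormal columns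
  have key : ∀ X : Matrix (Fin N) (Fin K) ℂ, Xᴴ * X = 1 →
      (1 + (c : ℂ) • (Xᴴ * Sgm * X)) =
        (Uᴴ * X)ᴴ * Matrix.diagonal (fun n => ((m n : ℝ) : ℂ)) * (Uᴴ * X) := by
    intro X hX
    have hVH : (Uᴴ * X)ᴴ = Xᴴ * U := by
      rw [conjTranspose_mul, conjTranspose_conjTranspose]
    have h1 : (Xᴴ * U) * (Uᴴ * X) = 1 := by
      rw [Matrix.mul_assoc, ← Matrix.mul_assoc U, hUU, Matrix.one_mul, hX]
    have h2 : (Xᴴ * U) * ((c : ℂ) • D) * (Uᴴ * X) = (c : ℂ) • (Xᴴ * Sgm * X) := by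
      rw [Matrix.mul_smul, Matrix.smul_mul, hSgm, hD]
      congr 1
      simp only [Matrix.mul_assoc]
    rw [hVH, hdiag, Matrix.mul_add, Matrix.add_mul, Matrix.mul_one, h1, h2]
  have hVV : ∀ X : Matrix (Fin N) (Fin K) ℂ, Xᴴ * X = 1 → (Uᴴ * X)ᴴ * (Uᴴ * X) = 1 := by
    intro X hX
    rw [conjTranspose_mul, conjTranspose_conjTranspose, Matrix.mul_assoc,
      ← Matrix.mul_assoc U, hUU, Matrix.one_mul, hX]
  -- normalization: the squared minors of V sum to 1
  have hsum : ∀ X : Matrix (Fin N) (Fin K) ℂ, Xᴴ * X = 1 →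
      (∑ q : {q : Fin K → Fin N // StrictMono q},
        Complex.normSq (((Uᴴ * X).submatrix q.1 id).det)) = 1 := by
    intro X hX
    have h := StmtTwelve.detVMV (Uᴴ * X) (fun _ => (1 : ℝ))
    rw [show Matrix.diagonal (fun n : Fin N => ((1 : ℝ) : ℂ)) = 1 by simp,
      Matrix.mul_one, hVV X hX, Matrix.det_one] at h
    have h' := h.symm
    rw [Complex.ofReal_eq_one] at h'
    simpa using h'
  set Pmax : ℝ := ∏ k : Fin K, (1 + c * β (Fin.castLE hK k)) with hPmax
  have hterm_le : ∀ q : {q : Fin K → Fin N // StrictMono q},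
      (∏ j, m (q.1 j)) ≤ Pmax := by
    intro q
    rw [hPmax]
    refine Finset.prod_le_prod (fun j _ => le_trans zero_le_one (hm1 _)) (fun j _ => ?_)
    have hle : Fin.castLE hK j ≤ q.1 j := by
      rw [Fin.le_def]
      simpa using StmtTwelve.strictMono_le q.1 q.2 j
    exact hmono hle
  have hterm_ge : ∀ q : {q : Fin K → Fin N // StrictMono q}, (1 : ℝ) ≤ ∏ j, m (q.1 j) :=
    fun q => by
      simpa using Finset.prod_le_prod (f := fun _ : Fin K => (1 : ℝ)) (g := fun j => m (q.1 j))
        (fun j _ => zero_le_one) (fun j _ => hm1 _)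
  have hPmax0 : 0 ≤ Pmax :=
    Finset.prod_nonneg fun k _ => le_trans zero_le_one (hm1 _)
  constructor
  · -- positivity and the bound for W
    have hdet : (1 + (c : ℂ) • (Wᴴ * Sgm * W)).det =
        ((∑ q : {q : Fin K → Fin N // StrictMono q},
          (∏ j, m (q.1 j)) * Complex.normSq (((Uᴴ * W).submatrix q.1 id).det) : ℝ) : ℂ) := by
      rw [key W hW, StmtTwelve.detVMV]
    set S : ℝ := ∑ q : {q : Fin K → Fin N // StrictMono q},
      (∏ j, m (q.1 j)) * Complex.normSq (((Uᴴ * W).submatrix q.1 id).det) with hS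
    have hS1 : 1 ≤ S := by
      rw [hS, ← hsum W hW]
      refine Finset.sum_le_sum fun q _ => ?_
      exact le_mul_of_one_le_left (Complex.normSq_nonneg _) (hterm_ge q)
    have hSle : S ≤ Pmax := by
      calc S ≤ ∑ q : {q : Fin K → Fin N // StrictMono q},
            Pmax * Complex.normSq (((Uᴴ * W).submatrix q.1 id).det) := by
            refine Finset.sum_le_sum fun q _ => ?_
            exact mul_le_mul_of_nonneg_right (hterm_le q) (Complex.normSq_nonneg _)
        _ = Pmax := by rw [← Finset.mul_sum, hsum W hW, mul_one]
    constructor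
    · rw [hdet]
      exact Complex.zero_lt_real.mpr (lt_of_lt_of_le one_pos hS1)
    · rw [hdet]
      exact Complex.real_le_real.mpr hSle
  · -- equality case
    intro W' hW' heig
    have hcol : Sgm * W' = W' * Matrix.diagonal (fun k => (β (Fin.castLE hK k) : ℂ)) := by
      ext i k
      have h := congrFun (heig k) i
      simp only [Matrix.mulVec, dotProduct, Pi.smul_apply, smul_eq_mul] at h
      rw [Matrix.mul_diagonal, Matrix.mul_apply, h, mul_comm]
    have hD' : W'ᴴ * Sgm * W' = Matrix.diagonal (fun k => (β (Fin.castLE hK k) : ℂ)) := by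
      rw [Matrix.mul_assoc, hcol, ← Matrix.mul_assoc, hW', Matrix.one_mul]
    have hfin : 1 + (c : ℂ) • (W'ᴴ * Sgm * W') =
        Matrix.diagonal (fun k => ((1 + c * β (Fin.castLE hK k) : ℝ) : ℂ)) := by
      rw [hD']
      ext i j
      rcases eq_or_ne i j with rfl | h
      · simp only [Matrix.add_apply, Matrix.one_apply_eq, Matrix.smul_apply,
          Matrix.diagonal_apply_eq, smul_eq_mul]
        push_cast; ring
      · simp [Matrix.diagonal_apply_ne _ h, Matrix.one_apply_ne h]
    rw [hfin, det_diagonal, hPmax]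
    push_cast
    rfl
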